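/- Let v, w be words over Ū_H ∪ {t, t⁻¹} in HNN reduced form such that w ⇝_m v, and write w ≡ t^{n₀} u₁ t^{n₁} ⋯ u_k t^{n_k} with u_j ∈ Ū_H and n_j ∈ ℤ. Then u_{m+1} ≡ φ^{n_m}(u_m⁻¹). -/

import Mathlib

/-- `S` is a free basis of the group `G`: the induced map from the free group
on `S` is an isomorphism. -/
def IsFreeBasis {G : Type*} [Group G] (S : Set G) : Prop :=
  Function.Bijective ⇑(FreeGroup.lift (Subtype.val : S → G))

/-- Letters of words over `Ū_H ∪ {t, t⁻¹}`: an element of the free group `H`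
(intended to lie in `Ū_H`), the stable letter `t`, or its inverse. -/
inductive HLetter (X : Type*) where
  | gen : FreeGroup X → HLetter X
  | t : HLetter X
  | tinv : HLetter X

namespace HnnPaper

variable {X : Type*}

/-- A word `w` is a word over `S ∪ {t, t⁻¹}` if all its group letters lie in `S`. -/
def WordOver (S : Set (FreeGroup X)) (w : List (HLetter X)) : Prop :=
  ∀ l ∈ w, ∀ u : FreeGroup X, l = HLetter.gen u → u ∈ S

/-- A word consisting only of group letters (no `t`, `t⁻¹`). -/
def IsGenOnly (w : List (HLetter X)) : Prop :=
  ∀ l ∈ w, ∃ u : FreeGroup X, l = HLetter.gen u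

/-- The element of `H` represented by a `t`-free word (treats `t`-letters as `1`). -/
def evalH (w : List (HLetter X)) : FreeGroup X :=
  (w.map fun l => match l with
    | HLetter.gen u => u
    | _ => 1).prod

/-- `w` is in HNN reduced form: it has no subword `t⁻¹ w_i t` with `w_i` a `t`-free
word representing an element of `A = ⟨U_A⟩`, and no subword `t w_i t⁻¹` with `w_i`
a `t`-free word representing an element of `B = ⟨U_B⟩`. -/
def HNNReducedWord (UA UB : Set (FreeGroup X)) (w : List (HLetter X)) : Prop :=
  (∀ p mid s, w = p ++ [HLetter.tinv] ++ mid ++ [HLetter.t] ++ s →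
      IsGenOnly mid → evalH mid ∉ Subgroup.closure UA) ∧
  (∀ p mid s, w = p ++ [HLetter.t] ++ mid ++ [HLetter.tinv] ++ s →
      IsGenOnly mid → evalH mid ∉ Subgroup.closure UB)

variable {UA UB : Set (FreeGroup X)}

/-- The element of the HNN extension `H* = H ∗_{t,φ:A→B}` represented by a word. -/
def evalStar (φ : ↥(Subgroup.closure UA) ≃* ↥(Subgroup.closure UB))
    (w : List (HLetter X)) :
    HNNExtension (FreeGroup X) (Subgroup.closure UA) (Subgroup.closure UB) φ :=
  (w.map fun l => match l with
    | HLetter.gen u => HNNExtension.of u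
    | HLetter.t => HNNExtension.t
    | HLetter.tinv => HNNExtension.t⁻¹).prod

/-- Elementary addition: insertion of a pair `u u⁻¹` with `u ∈ Ū_H`. -/
def ElemAdd (UH : Set (FreeGroup X)) (w w' : List (HLetter X)) : Prop :=
  ∃ (p s : List (HLetter X)) (u : FreeGroup X), u ∈ UH ∪ UH⁻¹ ∧ w = p ++ s ∧
    w' = p ++ [HLetter.gen u, HLetter.gen u⁻¹] ++ s

/-- Elementary cancellation: deletion of a pair `u u⁻¹` with `u ∈ Ū_H`. -/
def ElemDel (UH : Set (FreeGroup X)) (w w' : List (HLetter X)) : Prop :=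
  ElemAdd UH w' w

/-- Elementary semicommutation: replacement of `u_a t` by `t u_b`, or of `t⁻¹ u_a`
by `u_b t⁻¹` (or conversely in either case), where `u_a ∈ Ū_A`, `u_b ∈ Ū_B` and
`φ(u_a) = u_b`. -/
def ElemSemi (φ : ↥(Subgroup.closure UA) ≃* ↥(Subgroup.closure UB))
    (w w' : List (HLetter X)) : Prop :=
  ∃ (p s : List (HLetter X)) (a : ↥(Subgroup.closure UA)), (a : FreeGroup X) ∈ UA ∪ UA⁻¹ ∧
    ((w = p ++ [HLetter.gen ↑a, HLetter.t] ++ s ∧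
      w' = p ++ [HLetter.t, HLetter.gen ↑(φ a)] ++ s) ∨
     (w = p ++ [HLetter.t, HLetter.gen ↑(φ a)] ++ s ∧
      w' = p ++ [HLetter.gen ↑a, HLetter.t] ++ s) ∨
     (w = p ++ [HLetter.tinv, HLetter.gen ↑a] ++ s ∧
      w' = p ++ [HLetter.gen ↑(φ a), HLetter.tinv] ++ s) ∨
     (w = p ++ [HLetter.gen ↑(φ a), HLetter.tinv] ++ s ∧
      w' = p ++ [HLetter.tinv, HLetter.gen ↑a] ++ s))

/-- An elementary operation: an elementary addition, cancellation or semicommutation. -/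
def ElemOp (UH : Set (FreeGroup X)) (φ : ↥(Subgroup.closure UA) ≃* ↥(Subgroup.closure UB))
    (w w' : List (HLetter X)) : Prop :=
  ElemAdd UH w w' ∨ ElemDel UH w w' ∨ ElemSemi φ w w'

/-- `w ∼ w'`: a finite sequence of elementary semicommutations turns `w` into `w'`. -/
def Sim (φ : ↥(Subgroup.closure UA) ≃* ↥(Subgroup.closure UB)) :
    List (HLetter X) → List (HLetter X) → Prop :=
  Relation.ReflTransGen (ElemSemi φ)

/-- The word `t^n` (a run of `t`'s or of `t⁻¹`'s). -/
def tPow (n : ℤ) : List (HLetter X) :=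
  if 0 ≤ n then List.replicate n.toNat HLetter.t
  else List.replicate (-n).toNat HLetter.tinv

/-- The word `t^{n₀} u₁ t^{n₁} ⋯ u_k t^{n_k}` determined by `n₀` and the list
`[(u₁,n₁),…,(u_k,n_k)]`. -/
def blockWord (n0 : ℤ) (l : List (FreeGroup X × ℤ)) : List (HLetter X) :=
  tPow n0 ++ l.flatMap (fun p => HLetter.gen p.1 :: tPow p.2)

/-- `w →_m v`: `w ≡ t^{n₀} u₁ t^{n₁} ⋯ u_k t^{n_k}` with `u_{m+1} ≡ u_m⁻¹` and
`n_m = 0`, and `v` is obtained from `w` by the elementary cancellation of the pair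
`u_m u_{m+1}` (so `t^{n_{m-1}}` becomes `t^{n_{m-1}+n_{m+1}}`). -/
def CancelAt (m : ℕ) (w v : List (HLetter X)) : Prop :=
  ∃ (n0 : ℤ) (pre post : List (FreeGroup X × ℤ)) (u : FreeGroup X) (n' : ℤ),
    pre.length + 1 = m ∧
    w = blockWord n0 (pre ++ [(u, 0), (u⁻¹, n')] ++ post) ∧
    ((pre = [] ∧ v = blockWord (n0 + n') post) ∨
     (∃ pre' u' nl, pre = pre' ++ [(u', nl)] ∧
        v = blockWord n0 (pre' ++ [(u', nl + n')] ++ post)))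

/-- `w ⇝_m v`: there are HNN reduced words `w′, v′` with `w ∼ w′ →_m v′ ∼ v`. -/
def RsaAt (φ : ↥(Subgroup.closure UA) ≃* ↥(Subgroup.closure UB)) (m : ℕ)
    (w v : List (HLetter X)) : Prop :=
  ∃ w' v', HNNReducedWord UA UB w' ∧ HNNReducedWord UA UB v' ∧
    Sim φ w w' ∧ CancelAt m w' v' ∧ Sim φ v' v

/-- `w ⇝ v`: `w ⇝_m v` for some `m`. -/
def Rsa (φ : ↥(Subgroup.closure UA) ≃* ↥(Subgroup.closure UB))
    (w v : List (HLetter X)) : Prop :=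
  ∃ m, RsaAt φ m w v

/-- `w ≿ v`: either `w ∼ v` or there is a sequence `w ≡ w₀ ⇝ w₁ ⇝ ⋯ ⇝ w_k ≡ v`
with `k ≥ 1`. -/
def Succsim (φ : ↥(Subgroup.closure UA) ≃* ↥(Subgroup.closure UB))
    (w v : List (HLetter X)) : Prop :=
  Sim φ w v ∨ Relation.TransGen (Rsa φ) w v

/-- `v` is in most reduced form: it is HNN reduced and no `v ⇝ v'` is possible. -/
def MostReduced (φ : ↥(Subgroup.closure UA) ≃* ↥(Subgroup.closure UB))
    (v : List (HLetter X)) : Prop :=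
  HNNReducedWord UA UB v ∧ ∀ v', ¬ Rsa φ v v'

/-- `MRF(w)`: the set of words `v` with `v ≾ w` that are in most reduced form. -/
def MRF (φ : ↥(Subgroup.closure UA) ≃* ↥(Subgroup.closure UB))
    (w : List (HLetter X)) : Set (List (HLetter X)) :=
  {v | Succsim φ w v ∧ MostReduced φ v}

/-- The partial bijection `Ū_A → Ū_B` induced by `φ`, as a relation on `H`. -/
def PhiRel (φ : ↥(Subgroup.closure UA) ≃* ↥(Subgroup.closure UB))
    (u v : FreeGroup X) : Prop :=
  ∃ a : ↥(Subgroup.closure UA), (a : FreeGroup X) ∈ UA ∪ UA⁻¹ ∧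
    (a : FreeGroup X) = u ∧ ((φ a : ↥(Subgroup.closure UB)) : FreeGroup X) = v

/-- `v = φ^n(u)` for `n ∈ ℕ`. -/
def PhiPowN (φ : ↥(Subgroup.closure UA) ≃* ↥(Subgroup.closure UB)) :
    ℕ → FreeGroup X → FreeGroup X → Prop
  | 0 => Eq
  | (n + 1) => fun u v => ∃ w, PhiPowN φ n u w ∧ PhiRel φ w v

/-- `v = φ^z(u)` for `z ∈ ℤ`. -/
def PhiZPow (φ : ↥(Subgroup.closure UA) ≃* ↥(Subgroup.closure UB)) (z : ℤ)
    (u v : FreeGroup X) : Prop :=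
  if 0 ≤ z then PhiPowN φ z.toNat u v else PhiPowN φ (-z).toNat v u

end HnnPaper

namespace HnnPaper

variable {X : Type*} {UA UB : Set (FreeGroup X)}
  {φ : ↥(Subgroup.closure UA) ≃* ↥(Subgroup.closure UB)}

/-! ### Lemmas on `PhiRel`, `PhiPowN`, `PhiZPow` -/

lemma phiRel_func {u v v' : FreeGroup X} (h : PhiRel φ u v) (h' : PhiRel φ u v') : v = v' := by
  obtain ⟨a, _, ha, rfl⟩ := h
  obtain ⟨a', _, ha', rfl⟩ := h'
  have : a = a' := Subtype.coe_injective (ha.trans ha'.symm)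
  rw [this]

lemma phiRel_inj {u u' v : FreeGroup X} (h : PhiRel φ u v) (h' : PhiRel φ u' v) : u = u' := by
  obtain ⟨a, _, rfl, ha⟩ := h
  obtain ⟨a', _, rfl, ha'⟩ := h'
  have h2 : φ a = φ a' := Subtype.coe_injective (ha.trans ha'.symm)
  have := φ.injective h2
  rw [this]

lemma phiRel_inv {u v : FreeGroup X} (h : PhiRel φ u v) : PhiRel φ u⁻¹ v⁻¹ := by
  obtain ⟨a, hmem, rfl, rfl⟩ := h
  refine ⟨a⁻¹, ?_, by simp, by simp⟩
  rcases hmem with h | h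
  · exact Or.inr (by simpa [Set.mem_inv] using h)
  · exact Or.inl (by simpa [Set.mem_inv] using h)

lemma phiPowN_succ {n : ℕ} {u v : FreeGroup X} :
    PhiPowN φ (n + 1) u v ↔ ∃ w, PhiPowN φ n u w ∧ PhiRel φ w v := Iff.rfl

lemma phiPowN_add {m n : ℕ} {u v : FreeGroup X} :
    PhiPowN φ (m + n) u v ↔ ∃ w, PhiPowN φ m u w ∧ PhiPowN φ n w v := by
  induction n generalizing v with
  | zero => exact ⟨fun h => ⟨v, h, rfl⟩, fun ⟨w, hw, h⟩ => h ▸ hw⟩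
  | succ n ih =>
    rw [show m + (n + 1) = (m + n) + 1 from rfl, phiPowN_succ]
    constructor
    · rintro ⟨w, hw, hr⟩
      obtain ⟨x, hx1, hx2⟩ := ih.1 hw
      exact ⟨x, hx1, w, hx2, hr⟩
    · rintro ⟨w, hw, x, hx, hr⟩
      exact ⟨x, ih.2 ⟨w, hw, hx⟩, hr⟩

lemma phiPowN_func {n : ℕ} {u v v' : FreeGroup X} (h : PhiPowN φ n u v)
    (h' : PhiPowN φ n u v') : v = v' := by
  induction n generalizing v v' with
  | zero => exact h.symm.trans h'
  | succ n ih =>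
    obtain ⟨w, hw, hr⟩ := h
    obtain ⟨w', hw', hr'⟩ := h'
    rw [ih hw hw'] at hr
    exact phiRel_func hr hr'

lemma phiPowN_inj {n : ℕ} {u u' v : FreeGroup X} (h : PhiPowN φ n u v)
    (h' : PhiPowN φ n u' v) : u = u' := by
  induction n generalizing v with
  | zero => exact h.trans h'.symm
  | succ n ih =>
    obtain ⟨w, hw, hr⟩ := h
    obtain ⟨w', hw', hr'⟩ := h'
    rw [phiRel_inj hr hr'] at hw
    exact ih hw hw'

lemma phiPowN_inv {n : ℕ} {u v : FreeGroup X} (h : PhiPowN φ n u v) :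
    PhiPowN φ n u⁻¹ v⁻¹ := by
  induction n generalizing v with
  | zero => exact congrArg Inv.inv h
  | succ n ih =>
    obtain ⟨w, hw, hr⟩ := h
    exact ⟨w⁻¹, ih hw, phiRel_inv hr⟩

lemma phiPowN_cancel_right {d k : ℕ} {a b c : FreeGroup X} (h : PhiPowN φ (d + k) a b)
    (h2 : PhiPowN φ k c b) : PhiPowN φ d a c := by
  obtain ⟨w, hw, hk⟩ := phiPowN_add.1 h
  rwa [phiPowN_inj hk h2] at hw

lemma phiPowN_cancel_left {k d : ℕ} {a b c : FreeGroup X} (h : PhiPowN φ (k + d) b a)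
    (h2 : PhiPowN φ k b c) : PhiPowN φ d c a := by
  obtain ⟨w, hw, hd⟩ := phiPowN_add.1 h
  rwa [phiPowN_func hw h2] at hd

lemma phiZPow_of_nonneg {z : ℤ} {u v : FreeGroup X} (hz : 0 ≤ z) :
    PhiZPow φ z u v ↔ PhiPowN φ z.toNat u v := by
  unfold PhiZPow; rw [if_pos hz]

lemma phiZPow_of_neg {z : ℤ} {u v : FreeGroup X} (hz : z < 0) :
    PhiZPow φ z u v ↔ PhiPowN φ (-z).toNat v u := by
  unfold PhiZPow; rw [if_neg (not_le.2 hz)]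

lemma phiZPow_comp {z1 z2 z3 : ℤ} {a b c : FreeGroup X} (h1 : PhiZPow φ z1 a b)
    (h2 : PhiZPow φ z2 b c) (h3 : z1 + z2 = z3) : PhiZPow φ z3 a c := by
  rcases le_or_gt 0 z1 with hz1 | hz1 <;> rcases le_or_gt 0 z2 with hz2 | hz2
  · rw [phiZPow_of_nonneg hz1] at h1
    rw [phiZPow_of_nonneg hz2] at h2
    rw [phiZPow_of_nonneg (by omega), show z3.toNat = z1.toNat + z2.toNat by omega]
    exact phiPowN_add.2 ⟨b, h1, h2⟩
  · rw [phiZPow_of_nonneg hz1] at h1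
    rw [phiZPow_of_neg hz2] at h2
    rcases le_or_gt 0 z3 with hz3 | hz3
    · rw [phiZPow_of_nonneg hz3]
      rw [show z1.toNat = z3.toNat + (-z2).toNat by omega] at h1
      exact phiPowN_cancel_right h1 h2
    · rw [phiZPow_of_neg hz3]
      rw [show (-z2).toNat = (-z3).toNat + z1.toNat by omega] at h2
      exact phiPowN_cancel_right h2 h1
  · rw [phiZPow_of_neg hz1] at h1
    rw [phiZPow_of_nonneg hz2] at h2
    rcases le_or_gt 0 z3 with hz3 | hz3
    · rw [phiZPow_of_nonneg hz3]
      rw [show z2.toNat = (-z1).toNat + z3.toNat by omega] at h2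
      exact phiPowN_cancel_left h2 h1
    · rw [phiZPow_of_neg hz3]
      rw [show (-z1).toNat = z2.toNat + (-z3).toNat by omega] at h1
      exact phiPowN_cancel_left h1 h2
  · rw [phiZPow_of_neg hz1] at h1
    rw [phiZPow_of_neg hz2] at h2
    rw [phiZPow_of_neg (by omega), show (-z3).toNat = (-z2).toNat + (-z1).toNat by omega]
    exact phiPowN_add.2 ⟨b, h2, h1⟩

lemma phiZPow_symm {z : ℤ} {u v : FreeGroup X} (h : PhiZPow φ z u v) :
    PhiZPow φ (-z) v u := by
  rcases lt_trichotomy z 0 with hz | rfl | hz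
  · rw [phiZPow_of_neg hz] at h
    rw [phiZPow_of_nonneg (by omega)]
    exact h
  · have h' : u = v := (phiZPow_of_nonneg le_rfl).1 h
    rw [neg_zero, phiZPow_of_nonneg le_rfl]
    exact h'.symm
  · rw [phiZPow_of_nonneg hz.le] at h
    rw [phiZPow_of_neg (by omega), neg_neg]
    exact h

lemma phiZPow_inv {z : ℤ} {u v : FreeGroup X} (h : PhiZPow φ z u v) :
    PhiZPow φ z u⁻¹ v⁻¹ := by
  unfold PhiZPow at h ⊢
  split_ifs at h ⊢ <;> exact phiPowN_inv h

/-! ### Scanning words -/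

/-- Signed count of `t`-letters. -/
def tcount : List (HLetter X) → ℤ
  | [] => 0
  | HLetter.gen _ :: l => tcount l
  | HLetter.t :: l => tcount l + 1
  | HLetter.tinv :: l => tcount l - 1

/-- List of `gen` letters of a word together with the signed `t`-count to their left
(starting from `c`). -/
def scanW : List (HLetter X) → ℤ → List (FreeGroup X × ℤ)
  | [], _ => []
  | HLetter.gen u :: l, c => (u, c) :: scanW l c
  | HLetter.t :: l, c => scanW l (c + 1)
  | HLetter.tinv :: l, c => scanW l (c - 1)

lemma tcount_append (l1 l2 : List (HLetter X)) :
    tcount (l1 ++ l2) = tcount l1 + tcount l2 := by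
  induction l1 with
  | nil => simp [tcount]
  | cons hd tl ih => cases hd <;> simp [tcount, ih] <;> ring

lemma scanW_append (l1 l2 : List (HLetter X)) (c : ℤ) :
    scanW (l1 ++ l2) c = scanW l1 c ++ scanW l2 (c + tcount l1) := by
  induction l1 generalizing c with
  | nil => simp [scanW, tcount]
  | cons hd tl ih =>
    cases hd with
    | gen u =>
      show (u, c) :: scanW (tl ++ l2) c = ((u, c) :: scanW tl c) ++ scanW l2 (c + tcount tl)
      rw [ih, List.cons_append]
    | t =>
      show scanW (tl ++ l2) (c + 1) = scanW tl (c + 1) ++ scanW l2 (c + (tcount tl + 1))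
      rw [ih, show c + 1 + tcount tl = c + (tcount tl + 1) by ring]
    | tinv =>
      show scanW (tl ++ l2) (c - 1) = scanW tl (c - 1) ++ scanW l2 (c + (tcount tl - 1))
      rw [ih, show c - 1 + tcount tl = c + (tcount tl - 1) by ring]

lemma tcount_replicate_t (k : ℕ) : tcount (List.replicate k (HLetter.t : HLetter X)) = k := by
  induction k with
  | zero => simp [tcount]
  | succ k ih => simp [List.replicate_succ, tcount, ih]; try ring

lemma tcount_replicate_tinv (k : ℕ) :
    tcount (List.replicate k (HLetter.tinv : HLetter X)) = -(k : ℤ) := by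
  induction k with
  | zero => simp [tcount]
  | succ k ih => simp [List.replicate_succ, tcount, ih]; try ring

lemma scanW_replicate_t (k : ℕ) (c : ℤ) :
    scanW (List.replicate k (HLetter.t : HLetter X)) c = [] := by
  induction k generalizing c with
  | zero => simp [scanW]
  | succ k ih => simp [List.replicate_succ, scanW, ih]

lemma scanW_replicate_tinv (k : ℕ) (c : ℤ) :
    scanW (List.replicate k (HLetter.tinv : HLetter X)) c = [] := by
  induction k generalizing c with
  | zero => simp [scanW]
  | succ k ih => simp [List.replicate_succ, scanW, ih]

lemma tcount_tPow (n : ℤ) : tcount (tPow n : List (HLetter X)) = n := by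
  unfold tPow
  split_ifs with h
  · rw [tcount_replicate_t]; omega
  · rw [tcount_replicate_tinv]; omega

lemma scanW_tPow (n c : ℤ) : scanW (tPow n : List (HLetter X)) c = [] := by
  unfold tPow
  split_ifs with h
  · exact scanW_replicate_t _ _
  · exact scanW_replicate_tinv _ _

/-- Scan of a block decomposition. -/
def bscan : ℤ → List (FreeGroup X × ℤ) → List (FreeGroup X × ℤ)
  | _, [] => []
  | c, p :: l => (p.1, c) :: bscan (c + p.2) l

lemma bscan_length (c : ℤ) (l : List (FreeGroup X × ℤ)) : (bscan c l).length = l.length := by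
  induction l generalizing c with
  | nil => rfl
  | cons p l ih => simp [bscan, ih]

lemma scanW_flatMap (us : List (FreeGroup X × ℤ)) (c : ℤ) :
    scanW (us.flatMap fun p => HLetter.gen p.1 :: tPow p.2) c = bscan c us := by
  induction us generalizing c with
  | nil => simp [scanW, bscan]
  | cons p l ih =>
    rw [List.flatMap_cons, List.cons_append]
    show (p.1, c) :: scanW (tPow p.2 ++ _) c = _
    rw [scanW_append, scanW_tPow, tcount_tPow, List.nil_append, ih]
    rfl

lemma scanW_blockWord (n0 : ℤ) (us : List (FreeGroup X × ℤ)) :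
    scanW (blockWord n0 us) 0 = bscan n0 us := by
  unfold blockWord
  rw [scanW_append, scanW_tPow, tcount_tPow, List.nil_append, zero_add, scanW_flatMap]

lemma bscan_getElem (c : ℤ) (l : List (FreeGroup X × ℤ)) (i : ℕ) (h : i < l.length) :
    (bscan c l)[i]'(by rw [bscan_length]; exact h) =
      (l[i].1, c + ((l.take i).map Prod.snd).sum) := by
  induction l generalizing c i with
  | nil => simp at h
  | cons p l ih =>
    cases i with
    | zero => simp [bscan]
    | succ i =>
      have := ih (c + p.2) i (by simpa using h)
      simp only [bscan, List.getElem_cons_succ, List.take_succ_cons, List.map_cons,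
        List.sum_cons] at this ⊢
      rw [this]
      ring_nf

/-! ### The invariant relation -/

/-- Two scanned letters are related by a suitable power of `φ`. -/
def Rel2 (φ : ↥(Subgroup.closure UA) ≃* ↥(Subgroup.closure UB))
    (p q : FreeGroup X × ℤ) : Prop :=
  PhiZPow φ (q.2 - p.2) p.1 q.1

lemma rel2_refl (p : FreeGroup X × ℤ) : Rel2 φ p p := by
  unfold Rel2
  rw [sub_self, phiZPow_of_nonneg le_rfl]
  rfl

lemma rel2_trans {p q r : FreeGroup X × ℤ} (h1 : Rel2 φ p q) (h2 : Rel2 φ q r) : Rel2 φ p r :=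
  phiZPow_comp h1 h2 (by ring)

lemma forall₂_rel2_refl (l : List (FreeGroup X × ℤ)) : List.Forall₂ (Rel2 φ) l l :=
  List.forall₂_same.2 fun p _ => rel2_refl p

lemma forall₂_rel2_trans {l1 l2 l3 : List (FreeGroup X × ℤ)}
    (h1 : List.Forall₂ (Rel2 φ) l1 l2) (h2 : List.Forall₂ (Rel2 φ) l2 l3) :
    List.Forall₂ (Rel2 φ) l1 l3 := by
  induction h1 generalizing l3 with
  | nil => cases h2; exact List.Forall₂.nil
  | cons h t ih => cases h2 with | cons h' t' => exact List.Forall₂.cons (rel2_trans h h') (ih t')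

lemma rel2_phi {a : ↥(Subgroup.closure UA)} (ha : (a : FreeGroup X) ∈ UA ∪ UA⁻¹)
    {c d : ℤ} (h : d = c + 1) :
    Rel2 φ ((a : FreeGroup X), c) (((φ a : ↥(Subgroup.closure UB)) : FreeGroup X), d) := by
  unfold Rel2
  rw [show d - c = 1 by omega, phiZPow_of_nonneg (by norm_num)]
  exact ⟨(a : FreeGroup X), rfl, a, ha, rfl, rfl⟩

lemma rel2_phi' {a : ↥(Subgroup.closure UA)} (ha : (a : FreeGroup X) ∈ UA ∪ UA⁻¹)
    {c d : ℤ} (h : d = c - 1) :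
    Rel2 φ (((φ a : ↥(Subgroup.closure UB)) : FreeGroup X), c) ((a : FreeGroup X), d) := by
  unfold Rel2
  rw [show d - c = -1 by omega, phiZPow_of_neg (by norm_num)]
  exact ⟨(a : FreeGroup X), rfl, a, ha, rfl, rfl⟩

lemma elemSemi_scan {w w' : List (HLetter X)} (h : ElemSemi φ w w') :
    List.Forall₂ (Rel2 φ) (scanW w 0) (scanW w' 0) := by
  obtain ⟨p, s, a, ha, hc⟩ := h
  rcases hc with ⟨rfl, rfl⟩ | ⟨rfl, rfl⟩ | ⟨rfl, rfl⟩ | ⟨rfl, rfl⟩ <;>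
    rw [scanW_append, scanW_append, scanW_append, scanW_append] <;>
    simp only [tcount_append] <;>
    refine List.rel_append (List.rel_append (forall₂_rel2_refl _) ?_) (forall₂_rel2_refl _)
  · refine List.Forall₂.cons (rel2_phi ha ?_) List.Forall₂.nil; ring
  · refine List.Forall₂.cons (rel2_phi' ha ?_) List.Forall₂.nil; ring
  · refine List.Forall₂.cons (rel2_phi ha ?_) List.Forall₂.nil; ring
  · refine List.Forall₂.cons (rel2_phi' ha ?_) List.Forall₂.nil; ring

lemma forall₂_getElem {α β : Type*} {R : α → β → Prop} {l1 : List α} {l2 : List β}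
    (h : List.Forall₂ R l1 l2) (i : ℕ) (h1 : i < l1.length) (h2 : i < l2.length) :
    R l1[i] l2[i] := by
  simpa [List.get_eq_getElem] using h.get h1 h2

lemma sim_scan {w w' : List (HLetter X)} (h : Sim φ w w') :
    List.Forall₂ (Rel2 φ) (scanW w 0) (scanW w' 0) := by
  induction h with
  | refl => exact forall₂_rel2_refl _
  | tail _ hstep ih => exact forall₂_rel2_trans ih (elemSemi_scan hstep)

end HnnPaper


open HnnPaper

theorem statement_5
    (X : Type*) [Finite X]
    (UH UA UB : Set (FreeGroup X))
    (hUH : IsFreeBasis UH) (hUAH : UA ⊆ UH) (hUBH : UB ⊆ UH)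
    (φ : ↥(Subgroup.closure UA) ≃* ↥(Subgroup.closure UB))
    (hφ : ∀ a : ↥(Subgroup.closure UA), (a : FreeGroup X) ∈ UA ∪ UA⁻¹ ↔
      ((φ a : ↥(Subgroup.closure UB)) : FreeGroup X) ∈ UB ∪ UB⁻¹)
    (m : ℕ) (n0 : ℤ) (us : List (FreeGroup X × ℤ)) (v : List (HLetter X))
    (hw : WordOver (UH ∪ UH⁻¹) (blockWord n0 us))
    (hwred : HNNReducedWord UA UB (blockWord n0 us))
    (hv : WordOver (UH ∪ UH⁻¹) v) (hvred : HNNReducedWord UA UB v)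
    (h : RsaAt φ m (blockWord n0 us) v) :
    PhiZPow φ ((us.getD (m - 1) (1, 0)).2)
      ((us.getD (m - 1) (1, 0)).1)⁻¹ ((us.getD m (1, 0)).1) := by
  obtain ⟨w', v', hw'red, hv'red, hsim1, hcan, hsim2⟩ := h
  obtain ⟨n0', pre, post, u, n', hm, hw'eq, -⟩ := hcan
  have hf := sim_scan hsim1
  rw [hw'eq, scanW_blockWord, scanW_blockWord] at hf
  have hlenf := hf.length_eq
  rw [bscan_length, bscan_length] at hlenf
  simp only [List.length_append, List.length_cons, List.length_nil] at hlenf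
  have hilt : pre.length < us.length := by omega
  have hilt1 : pre.length + 1 < us.length := by omega
  have him : m - 1 = pre.length := by omega
  have hm2 : m = pre.length + 1 := by omega
  have hb1 : pre.length < (pre ++ [(u, 0), (u⁻¹, n')] ++ post).length := by
    simp only [List.length_append, List.length_cons, List.length_nil]; omega
  have hb2 : pre.length + 1 < (pre ++ [(u, 0), (u⁻¹, n')] ++ post).length := by
    simp only [List.length_append, List.length_cons, List.length_nil]; omega
  have h1 := forall₂_getElem hf pre.length (by rw [bscan_length]; omega)
    (by rw [bscan_length]; exact hb1)
  have h2 := forall₂_getElem hf (pre.length + 1) (by rw [bscan_length]; omega)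
    (by rw [bscan_length]; exact hb2)
  rw [bscan_getElem _ _ _ hilt, bscan_getElem _ _ _ hb1] at h1
  rw [bscan_getElem _ _ _ hilt1, bscan_getElem _ _ _ hb2] at h2
  have e1 : (pre ++ [(u, 0), (u⁻¹, n')] ++ post)[pre.length]'hb1 = (u, (0 : ℤ)) := by
    rw [List.getElem_append_left (by simp)]
    rw [List.getElem_append_right (le_refl pre.length)]
    simp
  have e2 : (pre ++ [(u, 0), (u⁻¹, n')] ++ post)[pre.length + 1]'hb2 = (u⁻¹, n') := by
    rw [List.getElem_append_left (by simp)]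
    rw [List.getElem_append_right (Nat.le_succ pre.length)]
    simp
  have t1 : (pre ++ [(u, 0), (u⁻¹, n')] ++ post).take pre.length = pre := by
    rw [List.append_assoc]
    exact List.take_left
  have t2 : (pre ++ [(u, 0), (u⁻¹, n')] ++ post).take (pre.length + 1) = pre ++ [(u, 0)] := by
    rw [List.append_assoc, List.take_append, List.take_of_length_le (by omega),
      show pre.length + 1 - pre.length = 1 by omega]
    rfl
  have t3 : us.take (pre.length + 1) = us.take pre.length ++ [us[pre.length]] := by
    rw [List.take_succ, List.getElem?_eq_getElem hilt]
    rfl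
  rw [e1, t1] at h1
  rw [e2, t2, t3] at h2
  simp only [List.map_append, List.sum_append, List.map_cons, List.map_nil, List.sum_cons,
    List.sum_nil] at h1 h2
  rw [him, hm2, List.getD_eq_getElem _ _ hilt, List.getD_eq_getElem _ _ hilt1]
  exact phiZPow_comp (phiZPow_inv h1) (phiZPow_symm h2) (by simp)
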